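/- There exist an integer k ≥ 5, a finite connected simple graph G, distinct vertices s_1, …, s_k of G with s_m adjacent to s_{m+1} for all 1 ≤ m < k and s_k adjacent to s_1, and indices 1 ≤ a < b < c ≤ k−1, such that for every sign vector ε ∈ {−1,1}³ there is a vertex v of G whose pattern p_v = ⟨d(v,s_2)−d(v,s_1), …, d(v,s_k)−d(v,s_{k−1})⟩ satisfies (p_v[a], p_v[b], p_v[c]) = ε. In other words, the matrix whose rows are the patterns of G has VC-dimension at least 3. -/

import Mathlib

namespace Stmt14Aux

def Ed : List (ℕ × ℕ) :=
  [(0,1),(1,2),(2,3),(3,4),(4,5),(5,0),(3,7),(0,6),(6,7),(2,6),(4,6),(5,7)]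

def A (u v : Fin 8) : Bool := decide ((u.1, v.1) ∈ Ed) || decide ((v.1, u.1) ∈ Ed)

lemma A_symm : ∀ u v : Fin 8, A u v = true → A v u = true := by decide
lemma A_irrefl : ∀ u : Fin 8, ¬ A u u = true := by decide

abbrev G8 : SimpleGraph (Fin 8) :=
  { Adj := fun u v => A u v = true
    symm := ⟨fun u v h => A_symm u v h⟩
    loopless := ⟨fun u h => A_irrefl u h⟩ }

instance : DecidableRel G8.Adj := fun u v => inferInstanceAs (Decidable (A u v = true))

lemma cert {V : Type} (G : SimpleGraph V) (s : V) (f : V → ℕ)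
    (h0 : ∀ v, f v = 0 ↔ v = s)
    (hstep : ∀ v, f v ≠ 0 → ∃ w, G.Adj w v ∧ f w + 1 = f v)
    (hlip : ∀ u v, G.Adj u v → f v ≤ f u + 1) (v : V) :
    G.Reachable s v ∧ G.dist s v = f v := by
  have upper : ∀ n (v : V), f v = n → G.Reachable s v ∧ G.dist s v ≤ f v := by
    intro n
    induction n with
    | zero =>
      intro v hv
      have hv' : v = s := (h0 v).1 hv
      subst hv'
      exact ⟨SimpleGraph.Reachable.refl _, by simp [hv]⟩
    | succ n ih =>
      intro v hv
      obtain ⟨w, hadj, hw⟩ := hstep v (by omega)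
      have hfw : f w = n := by omega
      obtain ⟨hr, hd⟩ := ih w hfw
      refine ⟨hr.trans hadj.reachable, ?_⟩
      obtain ⟨p, hp⟩ := hr.exists_walk_length_eq_dist
      have := SimpleGraph.dist_le (p.append hadj.toWalk)
      simp [SimpleGraph.Walk.length_append, hp] at this
      omega
  have lower : ∀ {u v : V} (p : G.Walk u v), f v ≤ f u + p.length := by
    intro u v p
    induction p with
    | nil => simp
    | cons h q ih =>
      have := hlip _ _ h
      simp only [SimpleGraph.Walk.length_cons]
      omega
  obtain ⟨hr, hle⟩ := upper (f v) v rfl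
  obtain ⟨p, hp⟩ := hr.exists_walk_length_eq_dist
  have h1 := lower p
  have h2 : f s = 0 := (h0 s).2 rfl
  exact ⟨hr, by omega⟩

def f2 : Fin 8 → ℕ := ![2, 1, 0, 1, 2, 3, 1, 2]
def f3 : Fin 8 → ℕ := ![3, 2, 1, 0, 1, 2, 2, 1]
def f4 : Fin 8 → ℕ := ![2, 3, 2, 1, 0, 1, 1, 2]
def f5 : Fin 8 → ℕ := ![1, 2, 3, 2, 1, 0, 2, 1]

end Stmt14Aux

open Stmt14Aux in
/-- Proposition 3 (the `≥ 3` direction): there is a finite connected graph with a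
boundary cycle `s_1, …, s_k` (`k ≥ 5`) and three pattern coordinates `a < b < c`
on which all `2³` sign vectors are realized by patterns of vertices, i.e. the
matrix of patterns has VC-dimension at least 3. -/
theorem stmt_14 :
    ∃ (k : ℕ) (_hk : 5 ≤ k),
    ∃ (V : Type) (_ : Fintype V) (G : SimpleGraph V) (s : Fin k → V),
      G.Connected ∧ Function.Injective s ∧
      (∀ m : ℕ, (hm : m + 1 < k) → G.Adj (s ⟨m, by omega⟩) (s ⟨m + 1, hm⟩)) ∧
      G.Adj (s ⟨k - 1, by omega⟩) (s ⟨0, by omega⟩) ∧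
      ∃ a b c : Fin (k - 1), a < b ∧ b < c ∧
        ∀ ε₁ ε₂ ε₃ : ℤ, (ε₁ = 1 ∨ ε₁ = -1) → (ε₂ = 1 ∨ ε₂ = -1) →
          (ε₃ = 1 ∨ ε₃ = -1) →
          ∃ v : V,
            (G.dist v (s ⟨(a : ℕ) + 1, by have := a.isLt; omega⟩) : ℤ)
              - (G.dist v (s ⟨(a : ℕ), by have := a.isLt; omega⟩) : ℤ) = ε₁ ∧
            (G.dist v (s ⟨(b : ℕ) + 1, by have := b.isLt; omega⟩) : ℤ)
              - (G.dist v (s ⟨(b : ℕ), by have := b.isLt; omega⟩) : ℤ) = ε₂ ∧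
            (G.dist v (s ⟨(c : ℕ) + 1, by have := c.isLt; omega⟩) : ℤ)
              - (G.dist v (s ⟨(c : ℕ), by have := c.isLt; omega⟩) : ℤ) = ε₃ := by
  have c2 := cert G8 ⟨2, by omega⟩ f2 (by decide) (by decide) (by decide)
  have c3 := cert G8 ⟨3, by omega⟩ f3 (by decide) (by decide) (by decide)
  have c4 := cert G8 ⟨4, by omega⟩ f4 (by decide) (by decide) (by decide)
  have c5 := cert G8 ⟨5, by omega⟩ f5 (by decide) (by decide) (by decide)
  have d2 : ∀ v, G8.dist v ⟨2, by omega⟩ = f2 v := fun v => by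
    rw [SimpleGraph.dist_comm]; exact (c2 v).2
  have d3 : ∀ v, G8.dist v ⟨3, by omega⟩ = f3 v := fun v => by
    rw [SimpleGraph.dist_comm]; exact (c3 v).2
  have d4 : ∀ v, G8.dist v ⟨4, by omega⟩ = f4 v := fun v => by
    rw [SimpleGraph.dist_comm]; exact (c4 v).2
  have d5 : ∀ v, G8.dist v ⟨5, by omega⟩ = f5 v := fun v => by
    rw [SimpleGraph.dist_comm]; exact (c5 v).2
  refine ⟨6, by norm_num, Fin 8, inferInstance, G8, fun i => ⟨i.1, by omega⟩,
    ?_, ?_, ?_, by decide,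
    ⟨2, by omega⟩, ⟨3, by omega⟩, ⟨4, by omega⟩, by decide, by decide, ?_⟩
  · constructor
    intro u v
    exact ((c2 u).1).symm.trans ((c2 v).1)
  · intro i j hij
    simp only [Fin.mk.injEq] at hij
    exact Fin.ext hij
  · intro m hm
    have hm5 : m < 5 := by omega
    interval_cases m <;> exact rfl
  · intro ε₁ ε₂ ε₃ h1 h2 h3
    obtain rfl | rfl := h1 <;> obtain rfl | rfl := h2 <;> obtain rfl | rfl := h3
    · exact ⟨2, by rw [d3, d2]; decide, by rw [d4, d3]; decide, by rw [d5, d4]; decide⟩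
    · exact ⟨1, by rw [d3, d2]; decide, by rw [d4, d3]; decide, by rw [d5, d4]; decide⟩
    · exact ⟨6, by rw [d3, d2]; decide, by rw [d4, d3]; decide, by rw [d5, d4]; decide⟩
    · exact ⟨0, by rw [d3, d2]; decide, by rw [d4, d3]; decide, by rw [d5, d4]; decide⟩
    · exact ⟨3, by rw [d3, d2]; decide, by rw [d4, d3]; decide, by rw [d5, d4]; decide⟩
    · exact ⟨7, by rw [d3, d2]; decide, by rw [d4, d3]; decide, by rw [d5, d4]; decide⟩
    · exact ⟨4, by rw [d3, d2]; decide, by rw [d4, d3]; decide, by rw [d5, d4]; decide⟩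
    · exact ⟨5, by rw [d3, d2]; decide, by rw [d4, d3]; decide, by rw [d5, d4]; decide⟩
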